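/- Unconditional positive definiteness of the discretized kinetic-energy matrix (Lemma 2, matrix form). Let n̂, n₁, n₂ be positive integers. Let Ĥ and Ĵ be positive diagonal n̂×n̂ real matrices, and let ĝ¹¹, ĝ¹², ĝ²² be diagonal n̂×n̂ real matrices such that for every index i the 2×2 matrix [[ĝ¹¹ᵢᵢ, ĝ¹²ᵢᵢ], [ĝ¹²ᵢᵢ, ĝ²²ᵢᵢ]] is positive definite. Let P_{c1} ∈ ℝ^{n̂×n₁} and P_{c2} ∈ ℝ^{n̂×n₂} be matrices whose null spaces are trivial (i.e., P_{c1}x = 0 implies x = 0 and P_{c2}y = 0 implies y = 0). Then the (n₁+n₂)×(n₁+n₂) block matrix with blocks [[P_{c1}ᵀ·Ĥ·Ĵ·ĝ¹¹·P_{c1}, P_{c1}ᵀ·Ĥ·Ĵ·ĝ¹²·P_{c2}], [P_{c2}ᵀ·Ĥ·Ĵ·ĝ¹²·P_{c1}, P_{c2}ᵀ·Ĥ·Ĵ·ĝ²²·P_{c2}]] is positive definite. -/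

import Mathlib

open Matrix

lemma aux_dot {n m k : ℕ} (P : Matrix (Fin n) (Fin m) ℝ) (Q : Matrix (Fin n) (Fin k) ℝ)
    (g : Fin n → ℝ) (x : Fin m → ℝ) (y : Fin k → ℝ) :
    x ⬝ᵥ (Pᵀ * diagonal g * Q) *ᵥ y = ∑ i, (P *ᵥ x) i * (g i * (Q *ᵥ y) i) := by
  rw [← mulVec_mulVec, ← mulVec_mulVec, dotProduct_mulVec, vecMul_transpose]
  simp [dotProduct, mulVec_diagonal]

lemma aux_vec_ne (a b : ℝ) (hab : a ≠ 0 ∨ b ≠ 0) : (![a, b] : Fin 2 → ℝ) ≠ 0 := by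
  intro h0
  have h1 : a = 0 := by simpa using congrFun h0 0
  have h2 : b = 0 := by simpa using congrFun h0 1
  rcases hab with h | h <;> [exact h h1; exact h h2]

lemma aux_quad_nonneg (g11 g12 g22 a b : ℝ)
    (h : (!![g11, g12; g12, g22] : Matrix (Fin 2) (Fin 2) ℝ).PosDef) :
    0 ≤ a * (g11 * a) + a * (g12 * b) + (b * (g12 * a) + b * (g22 * b)) := by
  have := h.posSemidef.dotProduct_mulVec_nonneg ![a, b]
  simp [Matrix.mulVec, dotProduct, Fin.sum_univ_two] at this
  nlinarith [this]

lemma aux_quad_pos (g11 g12 g22 a b : ℝ)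
    (h : (!![g11, g12; g12, g22] : Matrix (Fin 2) (Fin 2) ℝ).PosDef)
    (hab : a ≠ 0 ∨ b ≠ 0) :
    0 < a * (g11 * a) + a * (g12 * b) + (b * (g12 * a) + b * (g22 * b)) := by
  have := h.dotProduct_mulVec_pos (aux_vec_ne a b hab)
  simp [Matrix.mulVec, dotProduct, Fin.sum_univ_two] at this
  nlinarith [this]

lemma aux_herm {n m k : ℕ} (P : Matrix (Fin n) (Fin m) ℝ) (Q : Matrix (Fin n) (Fin k) ℝ)
    (g : Fin n → ℝ) :
    (Pᵀ * diagonal g * Q)ᴴ = Qᵀ * diagonal g * P := by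
  rw [conjTranspose_eq_transpose_of_trivial, transpose_mul, transpose_mul,
    transpose_transpose, diagonal_transpose, Matrix.mul_assoc]

/-- Unconditional positive definiteness of the discretized kinetic-energy matrix
(Lemma 2, matrix form). -/
theorem stmt2
    (nh n1 n2 : ℕ) (hnh : 0 < nh) (hn1 : 0 < n1) (hn2 : 0 < n2)
    (Hh Jh G11 G12 G22 : Matrix (Fin nh) (Fin nh) ℝ)
    (dHh dJh g11 g12 g22 : Fin nh → ℝ)
    (hHh : Hh = diagonal dHh) (hdHh : ∀ i, 0 < dHh i)
    (hJh : Jh = diagonal dJh) (hdJh : ∀ i, 0 < dJh i)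
    (hG11 : G11 = diagonal g11) (hG12 : G12 = diagonal g12) (hG22 : G22 = diagonal g22)
    (hg : ∀ i, (!![g11 i, g12 i; g12 i, g22 i] : Matrix (Fin 2) (Fin 2) ℝ).PosDef)
    (Pc1 : Matrix (Fin nh) (Fin n1) ℝ) (Pc2 : Matrix (Fin nh) (Fin n2) ℝ)
    (hPc1 : ∀ x, Pc1 *ᵥ x = 0 → x = 0) (hPc2 : ∀ y, Pc2 *ᵥ y = 0 → y = 0) :
    (fromBlocks
      (Pc1ᵀ * (Hh * Jh * G11) * Pc1) (Pc1ᵀ * (Hh * Jh * G12) * Pc2)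
      (Pc2ᵀ * (Hh * Jh * G12) * Pc1) (Pc2ᵀ * (Hh * Jh * G22) * Pc2)).PosDef := by
  subst hHh hJh hG11 hG12 hG22
  have hD : ∀ g : Fin nh → ℝ,
      diagonal dHh * diagonal dJh * diagonal g
        = diagonal (fun i => dHh i * dJh i * g i) := by
    intro g
    rw [diagonal_mul_diagonal, diagonal_mul_diagonal]
  rw [hD, hD, hD]
  refine posDef_iff_dotProduct_mulVec.mpr ⟨?_, ?_⟩
  · show _ᴴ = _
    simp only [fromBlocks_conjTranspose, aux_herm]
  · intro v hv
    set x : Fin n1 → ℝ := fun j => v (Sum.inl j) with hx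
    set y : Fin n2 → ℝ := fun j => v (Sum.inr j) with hy
    have hv' : v = Sum.elim x y := by funext s; cases s <;> rfl
    set u : Fin nh → ℝ := Pc1 *ᵥ x with hu
    set w : Fin nh → ℝ := Pc2 *ᵥ y with hw
    have expand : star v ⬝ᵥ (fromBlocks
        (Pc1ᵀ * diagonal (fun i => dHh i * dJh i * g11 i) * Pc1)
        (Pc1ᵀ * diagonal (fun i => dHh i * dJh i * g12 i) * Pc2)
        (Pc2ᵀ * diagonal (fun i => dHh i * dJh i * g12 i) * Pc1)
        (Pc2ᵀ * diagonal (fun i => dHh i * dJh i * g22 i) * Pc2)) *ᵥ v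
        = ∑ i, dHh i * dJh i *
            (u i * (g11 i * u i) + u i * (g12 i * w i)
              + (w i * (g12 i * u i) + w i * (g22 i * w i))) := by
      rw [hv', fromBlocks_mulVec]
      have hstar : star (Sum.elim x y) = Sum.elim x y := by
        funext s; cases s <;> simp
      rw [hstar]
      simp only [Sum.elim_comp_inl, Sum.elim_comp_inr, sumElim_dotProduct_sumElim, dotProduct_add, aux_dot]
      rw [← Finset.sum_add_distrib, ← Finset.sum_add_distrib, ← Finset.sum_add_distrib]
      apply Finset.sum_congr rfl
      intro i _
      ring
    rw [expand]
    -- v ≠ 0 gives a nonzero coordinate of u or w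
    have hxy : x ≠ 0 ∨ y ≠ 0 := by
      by_contra h
      push_neg at h
      apply hv
      rw [hv']
      funext s
      cases s with
      | inl j => simp [h.1]
      | inr j => simp [h.2]
    have huw : u ≠ 0 ∨ w ≠ 0 := by
      rcases hxy with h | h
      · exact Or.inl (fun h0 => h (hPc1 x h0))
      · exact Or.inr (fun h0 => h (hPc2 y h0))
    have hex : ∃ i, u i ≠ 0 ∨ w i ≠ 0 := by
      rcases huw with h | h
      · rcases Function.ne_iff.mp h with ⟨i, hi⟩
        exact ⟨i, Or.inl (by simpa using hi)⟩
      · rcases Function.ne_iff.mp h with ⟨i, hi⟩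
        exact ⟨i, Or.inr (by simpa using hi)⟩
    rcases hex with ⟨i0, hi0⟩
    apply Finset.sum_pos'
    · intro i _
      have := aux_quad_nonneg (g11 i) (g12 i) (g22 i) (u i) (w i) (hg i)
      have hd := mul_pos (hdHh i) (hdJh i)
      positivity
    · refine ⟨i0, Finset.mem_univ _, ?_⟩
      have := aux_quad_pos (g11 i0) (g12 i0) (g22 i0) (u i0) (w i0) (hg i0) hi0
      have hd := mul_pos (hdHh i0) (hdJh i0)
      positivity
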